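/- Let Φ_m(z_1,...,z_N) = ∏_{i<j}(z_i-z_j)^m for a positive integer m. Then the minimal total degree of Φ_m in z_1,...,z_a equals m·a(a-1)/2, i.e. the pattern of zeros of the Laughlin polynomial is S_a = m·binomial(a,2). -/
import Mathlib


open MvPolynomial

noncomputable section

/-- Variable type for the fusion of the first `a` variables: `Sum.inl i` are the
auxiliary variables `ξ i`, `Sum.inr none` is the fused variable (center of mass)
`z`, and `Sum.inr (some j)` are the untouched variables `z j` for `a ≤ j`. -/
abbrev FVars (N : ℕ) := Fin N ⊕ Option (Fin N)

/-- The auxiliary variables `ξ i` for `i < a`, with the constraint `∑ ξ i = 0`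
imposed by eliminating the last one. -/
def fuseXi (N a : ℕ) (i : Fin N) : MvPolynomial (FVars N) ℂ :=
  if i.val + 1 < a then X (Sum.inl i)
  else -(∑ j ∈ Finset.univ.filter (fun j : Fin N => j.val + 1 < a), X (Sum.inl j))

/-- Fusion substitution `z i = z + λ * ξ i` for `i < a`, where `λ` is the
polynomial variable and `z = X (Sum.inr none)`. -/
def fuse (N a : ℕ) : MvPolynomial (Fin N) ℂ →ₐ[ℂ] Polynomial (MvPolynomial (FVars N) ℂ) :=
  MvPolynomial.aeval (fun i =>
    if i.val < a then Polynomial.C (X (Sum.inr none)) + Polynomial.X * Polynomial.C (fuseXi N a i)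
    else Polynomial.C (X (Sum.inr (some i))))

/-- `Qcoeff N a P m` is the coefficient `Q^m` of `λ^m` in the fusion expansion of `P`. -/
def Qcoeff (N a : ℕ) (P : MvPolynomial (Fin N) ℂ) (m : ℕ) : MvPolynomial (FVars N) ℂ :=
  (fuse N a P).coeff m

/-- `minDeg N P a` is `S_a`: the minimal total degree of `P` in `z 1, ..., z a`. -/
def minDeg (N : ℕ) (P : MvPolynomial (Fin N) ℂ) (a : ℕ) : ℕ :=
  sInf {d | ∃ mo ∈ P.support, d = ∑ i ∈ Finset.univ.filter (fun i : Fin N => i.val < a), mo i}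

/-- Translation invariance of a multivariate polynomial. -/
def TransInv (N : ℕ) (P : MvPolynomial (Fin N) ℂ) : Prop :=
  ∀ c : ℂ, MvPolynomial.aeval (fun i : Fin N => X i + MvPolynomial.C c) P = P

/-- Symmetry of a multivariate polynomial. -/
def SymmPoly (N : ℕ) (P : MvPolynomial (Fin N) ℂ) : Prop :=
  ∀ σ : Equiv.Perm (Fin N), rename ⇑σ P = P

namespace Stmt15Aux

variable {N a : ℕ}

/-- weight of a monomial: total degree in the first `a` variables -/
def w (a : ℕ) (mo : Fin N →₀ ℕ) : ℕ :=
  ∑ i ∈ Finset.univ.filter (fun i : Fin N => i.val < a), mo i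

/-- substitution `X i ↦ t · X i` for `i < a` -/
def φ (N a : ℕ) : MvPolynomial (Fin N) ℂ →ₐ[ℂ] Polynomial (MvPolynomial (Fin N) ℂ) :=
  aeval (fun i => if i.val < a then Polynomial.X * Polynomial.C (X i) else Polynomial.C (X i))

lemma φ_monomial (mo : Fin N →₀ ℕ) (c : ℂ) :
    φ N a (monomial mo c) = Polynomial.monomial (w a mo) (monomial mo c) := by
  have hmono : (monomial mo c : MvPolynomial (Fin N) ℂ) = C c * ∏ i, X i ^ mo i := by
    rw [monomial_eq, Finsupp.prod_fintype]
    intro i; exact pow_zero _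
  rw [hmono, map_mul, map_prod]
  have h1 : φ N a (C c) = Polynomial.C (C c) := by
    simp [φ, algHom_C]
  have h2 : ∀ i : Fin N, φ N a (X i ^ mo i) =
      Polynomial.X ^ (if i.val < a then mo i else 0) * Polynomial.C (X i ^ mo i) := by
    intro i
    rw [map_pow]
    simp only [φ, aeval_X]
    split_ifs with h
    · rw [mul_pow, ← Polynomial.C_pow]
    · rw [pow_zero, one_mul, ← Polynomial.C_pow]
  rw [h1, Finset.prod_congr rfl (fun i _ => h2 i), Finset.prod_mul_distrib,
    Finset.prod_pow_eq_pow_sum, ← map_prod, ← Finset.sum_filter, mul_left_comm,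
    ← Polynomial.C_mul, ← hmono, mul_comm, Polynomial.C_mul_X_pow_eq_monomial]
  rfl


lemma coeff_φ (P : MvPolynomial (Fin N) ℂ) (d : ℕ) :
    (φ N a P).coeff d =
      ∑ mo ∈ P.support.filter (fun mo => w a mo = d), monomial mo (P.coeff mo) := by
  conv_lhs => rw [P.as_sum]
  rw [map_sum, Polynomial.finset_sum_coeff, Finset.sum_filter]
  refine Finset.sum_congr rfl (fun mo _ => ?_)
  rw [φ_monomial, Polynomial.coeff_monomial]

lemma coeff_φ_ne_zero_iff (P : MvPolynomial (Fin N) ℂ) (d : ℕ) :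
    (φ N a P).coeff d ≠ 0 ↔ ∃ mo ∈ P.support, w a mo = d := by
  rw [coeff_φ]
  constructor
  · intro h
    by_contra hc
    push_neg at hc
    refine h ?_
    rw [Finset.sum_eq_zero]
    intro mo hmo
    rw [Finset.mem_filter] at hmo
    exact absurd hmo.2 (hc mo hmo.1)
  · rintro ⟨mo₀, hmo₀, hw⟩
    intro h
    have := congrArg (MvPolynomial.coeff mo₀) h
    rw [MvPolynomial.coeff_sum, Finset.sum_eq_single mo₀] at this
    · rw [coeff_monomial, if_pos rfl, coeff_zero] at this
      exact (mem_support_iff.mp hmo₀) this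
    · intro b _ hb
      rw [coeff_monomial, if_neg hb]
    · intro hn
      rw [coeff_monomial, if_pos rfl]
      exact absurd (Finset.mem_filter.mpr ⟨hmo₀, hw⟩) hn

lemma φ_ne_zero {P : MvPolynomial (Fin N) ℂ} (hP : P ≠ 0) : φ N a P ≠ 0 := by
  obtain ⟨mo, hmo⟩ := support_nonempty.mpr hP
  intro h
  have : (φ N a P).coeff (w a mo) ≠ 0 := (coeff_φ_ne_zero_iff P _).mpr ⟨mo, hmo, rfl⟩
  rw [h] at this
  simp at this

lemma minDeg_eq {P : MvPolynomial (Fin N) ℂ} (hP : P ≠ 0) :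
    minDeg N P a = (φ N a P).natTrailingDegree := by
  have hS : {d | ∃ mo ∈ P.support, d = ∑ i ∈ Finset.univ.filter (fun i : Fin N => i.val < a), mo i}
      = {d | (φ N a P).coeff d ≠ 0} := by
    ext d
    simp only [Set.mem_setOf_eq, coeff_φ_ne_zero_iff]
    constructor
    · rintro ⟨mo, h1, h2⟩; exact ⟨mo, h1, h2.symm⟩
    · rintro ⟨mo, h1, h2⟩; exact ⟨mo, h1, h2.symm⟩
  rw [minDeg, hS]
  apply le_antisymm
  · exact Nat.sInf_le (Polynomial.coeff_natTrailingDegree_ne_zero.mpr (φ_ne_zero hP))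
  · have hne : {d | (φ N a P).coeff d ≠ 0}.Nonempty :=
      ⟨(φ N a P).natTrailingDegree, Polynomial.coeff_natTrailingDegree_ne_zero.mpr (φ_ne_zero hP)⟩
    exact Polynomial.natTrailingDegree_le_of_ne_zero (Nat.sInf_mem hne)

lemma ntd_prod {ι : Type*} {R : Type*} [CommRing R] [IsDomain R] (s : Finset ι)
    (f : ι → Polynomial R) (h : ∀ i ∈ s, f i ≠ 0) :
    (∏ i ∈ s, f i).natTrailingDegree = ∑ i ∈ s, (f i).natTrailingDegree := by
  induction s using Finset.cons_induction with
  | empty => simp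
  | cons i s hi ih =>
    rw [Finset.prod_cons, Finset.sum_cons,
      Polynomial.natTrailingDegree_mul (h i (Finset.mem_cons_self i s))
        (Finset.prod_ne_zero_iff.mpr fun j hj => h j (Finset.mem_cons_of_mem hj)),
      ih (fun j hj => h j (Finset.mem_cons_of_mem hj))]

lemma ntd_pow {R : Type*} [CommRing R] [IsDomain R] (p : Polynomial R) (hp : p ≠ 0) (n : ℕ) :
    (p ^ n).natTrailingDegree = n * p.natTrailingDegree := by
  induction n with
  | zero => simp
  | succ k ih =>
    rw [pow_succ, Polynomial.natTrailingDegree_mul (pow_ne_zero _ hp) hp, ih]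
    ring


lemma X_sub_X_ne_zero {i j : Fin N} (hij : i ≠ j) :
    (X i - X j : MvPolynomial (Fin N) ℂ) ≠ 0 :=
  sub_ne_zero.mpr (fun h => hij (MvPolynomial.X_injective h))

lemma ntd_factor {i j : Fin N} (hij : i < j) :
    (φ N a (X i - X j)).natTrailingDegree = if j.val < a then 1 else 0 := by
  have hsub := X_sub_X_ne_zero (N := N) (ne_of_lt hij)
  rw [map_sub]
  simp only [φ, aeval_X]
  by_cases hj : j.val < a
  · have hi : i.val < a := lt_of_le_of_lt (Nat.le_of_lt hij) hj
    rw [if_pos hi, if_pos hj, if_pos hj]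
    have h1 : Polynomial.X * Polynomial.C (X i) - Polynomial.X * Polynomial.C (X j)
        = Polynomial.monomial 1 (X i - X j : MvPolynomial (Fin N) ℂ) := by
      rw [← mul_sub, ← Polynomial.C_sub, mul_comm, ← pow_one (Polynomial.X),
        Polynomial.C_mul_X_pow_eq_monomial]
    rw [h1, Polynomial.natTrailingDegree_monomial hsub]
  · rw [if_neg hj, if_neg hj]
    by_cases hi : i.val < a
    · rw [if_pos hi]
      refine Nat.le_zero.mp (Polynomial.natTrailingDegree_le_of_ne_zero ?_)
      rw [Polynomial.coeff_sub, Polynomial.coeff_C_zero, Polynomial.coeff_zero_eq_eval_zero]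
      simp [X_ne_zero]
    · rw [if_neg hi, ← Polynomial.C_sub, Polynomial.natTrailingDegree_C]

lemma card_pairs (ha : a ≤ N) :
    (Finset.univ.filter (fun p : Fin N × Fin N => p.1 < p.2 ∧ p.2.val < a)).card
      = a.choose 2 := by
  rw [Finset.card_filter, Fintype.sum_prod_type, Finset.sum_comm]
  have hinner : ∀ j : Fin N,
      (∑ i : Fin N, if i < j ∧ j.val < a then 1 else 0) = if j.val < a then j.val else 0 := by
    intro j
    by_cases cj : j.val < a
    · simp only [cj, and_true, if_pos]
      rw [← Finset.card_filter]
      have : (Finset.univ.filter (fun i : Fin N => i < j)) = Finset.Iio j :=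
        Finset.filter_gt_eq_Iio
      rw [this, Fin.card_Iio]
    · simp [cj]
  rw [Finset.sum_congr rfl (fun j _ => hinner j)]
  rw [Fin.sum_univ_eq_sum_range (fun v => if v < a then v else 0) N]
  rw [← Finset.sum_subset (Finset.range_subset_range.mpr ha)
    (fun v _ hv => by rw [if_neg (by simpa using hv)])]
  rw [Finset.sum_congr rfl (fun v hv => if_pos (Finset.mem_range.mp hv)),
    Finset.sum_range_id, Nat.choose_two_right]

end Stmt15Aux

/-- the pattern of zeros of the Laughlin polynomial
`Φ_m = ∏_{i<j} (z_i - z_j)^m` is `S_a = m * C(a,2)`. -/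
theorem stmt15 (N m a : ℕ) (hm : 0 < m) (ha : a ≤ N) :
    minDeg N (∏ p ∈ Finset.univ.filter (fun p : Fin N × Fin N => p.1 < p.2),
      (X p.1 - X p.2) ^ m) a = m * a.choose 2 := by
  classical
  set S := Finset.univ.filter (fun p : Fin N × Fin N => p.1 < p.2) with hSdef
  have hfac : ∀ p ∈ S, ((X p.1 - X p.2 : MvPolynomial (Fin N) ℂ) ^ m) ≠ 0 := by
    intro p hp
    exact pow_ne_zero _ (Stmt15Aux.X_sub_X_ne_zero (ne_of_lt (Finset.mem_filter.mp hp).2))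
  have hΦ : (∏ p ∈ S, (X p.1 - X p.2 : MvPolynomial (Fin N) ℂ) ^ m) ≠ 0 :=
    Finset.prod_ne_zero_iff.mpr hfac
  rw [Stmt15Aux.minDeg_eq (a := a) hΦ, map_prod, Stmt15Aux.ntd_prod _ _
    (fun p hp => Stmt15Aux.φ_ne_zero (hfac p hp))]
  have hterm : ∀ p ∈ S, (Stmt15Aux.φ N a ((X p.1 - X p.2) ^ m)).natTrailingDegree
      = m * (if p.2.val < a then 1 else 0) := by
    intro p hp
    rw [map_pow, Stmt15Aux.ntd_pow _
      (Stmt15Aux.φ_ne_zero (Stmt15Aux.X_sub_X_ne_zero (ne_of_lt (Finset.mem_filter.mp hp).2))),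
      Stmt15Aux.ntd_factor (Finset.mem_filter.mp hp).2]
  rw [Finset.sum_congr rfl hterm, ← Finset.mul_sum]
  congr 1
  have : (∑ p ∈ S, if p.2.val < a then 1 else 0)
      = (Finset.univ.filter (fun p : Fin N × Fin N => p.1 < p.2 ∧ p.2.val < a)).card := by
    rw [Finset.card_filter, hSdef, Finset.sum_filter]
    refine Finset.sum_congr rfl (fun p _ => ?_)
    by_cases h1 : p.1 < p.2 <;> simp [h1]
  rw [this, Stmt15Aux.card_pairs ha]
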